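/- Let n be a positive integer and let u : (0,∞) × [−1,1] → ℝ be a function which is continuous, continuously differentiable in t, and twice continuously differentiable in the second variable s up to the boundary, satisfying ∂_t u(t,s) = (1−s²) ∂_s² u(t,s) − (n+1) s ∂_s u(t,s) for all t > 0 and s ∈ [−1,1]. For t > 0 and σ ∈ (−1,1) define w(t,σ) = ∫_0^{1+σ} ξ^{-1/2} u(t, σ−ξ) dξ. Then ∂_t w − (1−σ²) ∂_σ² w + n σ ∂_σ w = ((2n−1)/4) w − (n−1)(1+σ)^{-1/2} u(t,−1) for all t > 0 and σ ∈ (−1,1). -/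

import Mathlib

open Real Set MeasureTheory Filter Topology

open Metric

lemma sit_integrable {f : ℝ → ℝ} (hf : ContinuousOn f (Icc 0 1)) :
    IntegrableOn (fun η : ℝ => η ^ (-(1 : ℝ) / 2) * f η) (Ioc 0 1) := by
  have hr : IntegrableOn (fun η : ℝ => η ^ (-(1 : ℝ) / 2)) (Ioc 0 1) := by
    have := (intervalIntegral.intervalIntegrable_rpow' (a := 0) (b := 1)
      (r := -(1:ℝ)/2) (by norm_num))
    simpa [intervalIntegrable_iff, uIoc_of_le (by norm_num : (0:ℝ) ≤ 1)] using this
  obtain ⟨C, hC⟩ := (isCompact_Icc.exists_bound_of_continuousOn hf)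
  have hmeas : AEStronglyMeasurable f (volume.restrict (Ioc 0 1)) :=
    (hf.mono Ioc_subset_Icc_self).aestronglyMeasurable measurableSet_Ioc
  have := hr.bdd_mul (c := C) hmeas ?_
  · exact this.congr (by filter_upwards with x using mul_comm _ _)
  · filter_upwards [ae_restrict_mem measurableSet_Ioc] with x hx
    exact hC x (Ioc_subset_Icc_self hx)

lemma sit_hasDerivAt (x₀ ε C : ℝ) (hε : 0 < ε) (G G' : ℝ → ℝ → ℝ)
    (hG : ∀ x ∈ ball x₀ ε, ContinuousOn (G x) (Icc 0 1))
    (hG'c : ContinuousOn (G' x₀) (Icc 0 1))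
    (hbd : ∀ x ∈ ball x₀ ε, ∀ η ∈ Ioc (0:ℝ) 1, |G' x η| ≤ C)
    (hdiff : ∀ η ∈ Ioc (0:ℝ) 1, ∀ x ∈ ball x₀ ε, HasDerivAt (fun y => G y η) (G' x η) x) :
    HasDerivAt (fun x => ∫ η in Ioc (0:ℝ) 1, η ^ (-(1 : ℝ) / 2) * G x η)
      (∫ η in Ioc (0:ℝ) 1, η ^ (-(1 : ℝ) / 2) * G' x₀ η) x₀ := by
  have hx₀ : x₀ ∈ ball x₀ ε := mem_ball_self hε
  have key := hasDerivAt_integral_of_dominated_loc_of_deriv_le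
    (μ := volume.restrict (Ioc 0 1)) (x₀ := x₀)
    (F := fun x η => η ^ (-(1 : ℝ) / 2) * G x η)
    (F' := fun x η => η ^ (-(1 : ℝ) / 2) * G' x η)
    (bound := fun η => η ^ (-(1 : ℝ) / 2) * C) (ball_mem_nhds x₀ hε)
    ?_ (sit_integrable (hG x₀ hx₀)) (sit_integrable hG'c).aestronglyMeasurable ?_
    ((sit_integrable (continuousOn_const)) : _) ?_
  · exact key.2
  · filter_upwards [ball_mem_nhds x₀ hε] with x hx
    exact (sit_integrable (hG x hx)).aestronglyMeasurable
  · filter_upwards [ae_restrict_mem measurableSet_Ioc] with η hη x hx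
    have h0 : (0:ℝ) ≤ η ^ (-(1 : ℝ) / 2) := le_of_lt (rpow_pos_of_pos hη.1 _)
    rw [norm_mul, Real.norm_eq_abs, Real.norm_eq_abs, abs_of_nonneg h0]
    exact mul_le_mul_of_nonneg_left (hbd x hx η hη) h0
  · filter_upwards [ae_restrict_mem measurableSet_Ioc] with η hη x hx
    exact (hdiff η hη x hx).const_mul _

/-- Analytic core of the spherical integral recurrence with boundary term: if `u` is
continuous on `(0,∞) × [-1,1]`, continuously differentiable in `t`, twice continuously
differentiable in `s` up to the boundary, and satisfies
`∂_t u = (1-s²) ∂_s² u - (n+1) s ∂_s u` on `(0,∞) × [-1,1]`, then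
`w(t,σ) = ∫_0^{1+σ} ξ^{-1/2} u(t,σ-ξ) dξ` satisfies
`∂_t w - (1-σ²) ∂_σ² w + n σ ∂_σ w = ((2n-1)/4) w - (n-1)(1+σ)^{-1/2} u(t,-1)`
for `t > 0` and `σ ∈ (-1,1)`. -/
theorem spherical_integral_transform_heat_equation (n : ℕ) (hn : 0 < n)
    (u w : ℝ → ℝ → ℝ)
    (hcont : ContinuousOn (fun p : ℝ × ℝ => u p.1 p.2) (Set.Ioi 0 ×ˢ Set.Icc (-1) 1))
    -- continuously differentiable in `t`
    (hdt : ∀ s ∈ Set.Icc (-1 : ℝ) 1, DifferentiableOn ℝ (fun τ => u τ s) (Set.Ioi 0))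
    (hdtc : ContinuousOn (fun p : ℝ × ℝ => deriv (fun τ => u τ p.2) p.1)
      (Set.Ioi 0 ×ˢ Set.Icc (-1) 1))
    -- twice continuously differentiable in `s` up to the boundary
    (hds : ∀ t ∈ Set.Ioi (0 : ℝ),
      ContDiffOn ℝ 2 (fun x => u t x) (Set.Icc (-1 : ℝ) 1))
    (hdsc₁ : ContinuousOn
      (fun p : ℝ × ℝ => derivWithin (fun x => u p.1 x) (Set.Icc (-1 : ℝ) 1) p.2)
      (Set.Ioi 0 ×ˢ Set.Icc (-1) 1))
    (hdsc₂ : ContinuousOn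
      (fun p : ℝ × ℝ =>
        derivWithin (fun x => derivWithin (fun y => u p.1 y) (Set.Icc (-1 : ℝ) 1) x)
          (Set.Icc (-1 : ℝ) 1) p.2)
      (Set.Ioi 0 ×ˢ Set.Icc (-1) 1))
    -- the spherical heat equation in the variable `s = cos r`, up to the boundary
    (hueq : ∀ t ∈ Set.Ioi (0 : ℝ), ∀ s ∈ Set.Icc (-1 : ℝ) 1,
      deriv (fun τ => u τ s) t =
        (1 - s ^ 2) *
            derivWithin (fun x => derivWithin (fun y => u t y) (Set.Icc (-1 : ℝ) 1) x)
              (Set.Icc (-1 : ℝ) 1) s -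
          ((n : ℝ) + 1) * s * derivWithin (fun x => u t x) (Set.Icc (-1 : ℝ) 1) s)
    (hw : ∀ t σ : ℝ, w t σ = ∫ ξ in Set.Ioc (0 : ℝ) (1 + σ), ξ ^ (-(1 : ℝ) / 2) * u t (σ - ξ)) :
    ∀ t ∈ Set.Ioi (0 : ℝ), ∀ σ ∈ Set.Ioo (-1 : ℝ) 1,
      deriv (fun τ => w τ σ) t - (1 - σ ^ 2) * deriv (fun x => deriv (fun y => w t y) x) σ +
          (n : ℝ) * σ * deriv (fun x => w t x) σ =
        (2 * (n : ℝ) - 1) / 4 * w t σ -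
          ((n : ℝ) - 1) * (1 + σ) ^ (-(1 : ℝ) / 2) * u t (-1) := by
  intro t ht σ hσ
  set I : Set ℝ := Set.Icc (-1 : ℝ) 1 with hI
  -- abbreviations
  set U1 : ℝ → ℝ → ℝ := fun τ s => derivWithin (fun x => u τ x) I s with hU1
  set U2 : ℝ → ℝ → ℝ := fun τ s =>
    derivWithin (fun x => derivWithin (fun y => u τ y) I x) I s with hU2
  set A : ℝ → ℝ → ℝ := fun x η => x - (1 + x) * η with hA
  -- membership facts
  have hmem : ∀ x ∈ Ioo (-1:ℝ) 1, ∀ η ∈ Icc (0:ℝ) 1, A x η ∈ I := by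
    intro x hx η hη
    simp only [hA, hI, Set.mem_Icc]
    constructor <;> nlinarith [hx.1, hx.2, hη.1, hη.2]
  have hmemo : ∀ x ∈ Ioo (-1:ℝ) 1, ∀ η ∈ Ioo (0:ℝ) 1, A x η ∈ Ioo (-1:ℝ) 1 := by
    intro x hx η hη
    simp only [hA, Set.mem_Ioo]
    constructor <;> nlinarith [hx.1, hx.2, hη.1, hη.2]
  -- sectional continuity
  have hcu : ∀ τ ∈ Ioi (0:ℝ), ContinuousOn (fun s => u τ s) I := by
    intro τ hτ
    exact hcont.comp (by fun_prop) (fun s hs => Set.mk_mem_prod hτ hs)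
  have hcU1 : ∀ τ ∈ Ioi (0:ℝ), ContinuousOn (fun s => U1 τ s) I := by
    intro τ hτ
    exact hdsc₁.comp (by fun_prop) (fun s hs => Set.mk_mem_prod hτ hs)
  have hcU2 : ∀ τ ∈ Ioi (0:ℝ), ContinuousOn (fun s => U2 τ s) I := by
    intro τ hτ
    exact hdsc₂.comp (by fun_prop) (fun s hs => Set.mk_mem_prod hτ hs)
  -- sectional differentiability
  have hU1d : ∀ τ ∈ Ioi (0:ℝ), ∀ s ∈ Ioo (-1:ℝ) 1, HasDerivAt (fun x => u τ x) (U1 τ s) s := by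
    intro τ hτ s hs
    have h1 : DifferentiableWithinAt ℝ (fun x => u τ x) I s :=
      ((hds τ hτ).differentiableOn (by norm_num)) s (Set.Ioo_subset_Icc_self hs)
    exact h1.hasDerivWithinAt.hasDerivAt (Icc_mem_nhds hs.1 hs.2)
  have hU2d : ∀ τ ∈ Ioi (0:ℝ), ∀ s ∈ Ioo (-1:ℝ) 1, HasDerivAt (fun x => U1 τ x) (U2 τ s) s := by
    intro τ hτ s hs
    have h0 : ContDiffOn ℝ 1 (fun x => U1 τ x) I :=
      (hds τ hτ).derivWithin (uniqueDiffOn_Icc (by norm_num)) (by norm_num)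
    have h1 : DifferentiableWithinAt ℝ (fun x => U1 τ x) I s :=
      (h0.differentiableOn (by norm_num)) s (Set.Ioo_subset_Icc_self hs)
    exact h1.hasDerivWithinAt.hasDerivAt (Icc_mem_nhds hs.1 hs.2)
  have hUtd : ∀ s ∈ I, ∀ τ ∈ Ioi (0:ℝ),
      HasDerivAt (fun τ' => u τ' s) (deriv (fun τ' => u τ' s) τ) τ := by
    intro s hs τ hτ
    exact (((hdt s hs) τ hτ).differentiableAt (Ioi_mem_nhds hτ)).hasDerivAt
  -- change of variables
  have hcov : ∀ τ : ℝ, ∀ x ∈ Ioo (-1:ℝ) 1, w τ x =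
      (1+x) ^ ((1:ℝ)/2) * ∫ η in Ioc (0:ℝ) 1, η ^ (-(1:ℝ)/2) * u τ (A x η) := by
    intro τ x hx
    have hc : (0:ℝ) < 1 + x := by linarith [hx.1]
    rw [hw]
    have h1 : (∫ ξ in Ioc (0:ℝ) (1+x), ξ ^ (-(1:ℝ)/2) * u τ (x - ξ))
        = ∫ ξ in (0:ℝ)..(1+x), ξ ^ (-(1:ℝ)/2) * u τ (x - ξ) :=
      (intervalIntegral.integral_of_le hc.le).symm
    have h2 : ((1+x) • ∫ η in (0:ℝ)..1, ((1+x)*η) ^ (-(1:ℝ)/2) * u τ (x - (1+x)*η))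
        = ∫ ξ in (0:ℝ)..(1+x), ξ ^ (-(1:ℝ)/2) * u τ (x - ξ) := by
      have := intervalIntegral.smul_integral_comp_mul_left
        (f := fun ξ => ξ ^ (-(1:ℝ)/2) * u τ (x - ξ)) (a := (0:ℝ)) (b := 1) (1+x)
      simpa using this
    have h3 : (∫ η in (0:ℝ)..1, ((1+x)*η) ^ (-(1:ℝ)/2) * u τ (x - (1+x)*η))
        = ∫ η in Ioc (0:ℝ) 1, ((1+x)*η) ^ (-(1:ℝ)/2) * u τ (x - (1+x)*η) :=
      intervalIntegral.integral_of_le (by norm_num)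
    have h4 : (∫ η in Ioc (0:ℝ) 1, ((1+x)*η) ^ (-(1:ℝ)/2) * u τ (x - (1+x)*η))
        = ∫ η in Ioc (0:ℝ) 1, (1+x) ^ (-(1:ℝ)/2) * (η ^ (-(1:ℝ)/2) * u τ (A x η)) := by
      refine setIntegral_congr_fun measurableSet_Ioc (fun η hη => ?_)
      rw [Real.mul_rpow hc.le hη.1.le]
      simp only [hA]; ring
    have h5 : (∫ η in Ioc (0:ℝ) 1, (1+x) ^ (-(1:ℝ)/2) * (η ^ (-(1:ℝ)/2) * u τ (A x η)))
        = (1+x) ^ (-(1:ℝ)/2) * ∫ η in Ioc (0:ℝ) 1, η ^ (-(1:ℝ)/2) * u τ (A x η) :=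
      integral_const_mul _ _
    rw [h1, ← h2, h3, h4, h5, smul_eq_mul, ← mul_assoc]
    congr 1
    rw [← Real.rpow_one_add' hc.le (by norm_num)]
    norm_num
  have habs : ∀ η ∈ Ioc (0:ℝ) 1, |1 - η| ≤ 1 := by
    intro η hη
    rw [abs_of_nonneg (by linarith [hη.2])]
    linarith [hη.1]
  -- derivative in t under the integral sign
  have hDt : HasDerivAt (fun τ => ∫ η in Ioc (0:ℝ) 1, η ^ (-(1:ℝ)/2) * u τ (A σ η))
      (∫ η in Ioc (0:ℝ) 1, η ^ (-(1:ℝ)/2) * deriv (fun τ' => u τ' (A σ η)) t) t := by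
    have ht0 : (0:ℝ) < t := ht
    have hball : ball t (t/2) ⊆ Ioi (0:ℝ) := by
      intro y hy
      rw [Real.ball_eq_Ioo] at hy
      simpa using lt_trans (by linarith) hy.1
    have hKc : IsCompact (Icc (t/2) (2*t) ×ˢ I) := isCompact_Icc.prod isCompact_Icc
    have hKsub : Icc (t/2) (2*t) ×ˢ I ⊆ Ioi 0 ×ˢ I := by
      refine Set.prod_mono_left ?_
      intro y hy
      simpa using lt_of_lt_of_le (by linarith) hy.1
    obtain ⟨C, hC⟩ := hKc.exists_bound_of_continuousOn (hdtc.mono hKsub)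
    refine sit_hasDerivAt t (t/2) C (by linarith) (fun τ η => u τ (A σ η))
      (fun τ η => deriv (fun τ' => u τ' (A σ η)) τ) ?_ ?_ ?_ ?_
    · intro τ hτ
      exact (hcu τ (hball hτ)).comp (Continuous.continuousOn (by simp only [hA]; fun_prop))
        (fun η hη => hmem σ hσ η hη)
    · refine hdtc.comp (f := fun η : ℝ => ((t : ℝ), A σ η)) ?_ ?_
      · exact Continuous.continuousOn (by simp only [hA]; fun_prop)
      · exact fun η hη => Set.mk_mem_prod ht (hmem σ hσ η hη)
    · intro τ hτ η hη
      rw [Real.ball_eq_Ioo] at hτ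
      have := hC (τ, A σ η) (Set.mk_mem_prod ⟨by linarith [hτ.1], by linarith [hτ.2]⟩
        (hmem σ hσ η (Ioc_subset_Icc_self hη)))
      simpa using this
    · intro η hη τ hτ
      exact hUtd (A σ η) (hmem σ hσ η (Ioc_subset_Icc_self hη)) τ (hball hτ)
  -- first derivative in the space variable under the integral sign
  have hDx : ∀ x ∈ Ioo (-1:ℝ) 1,
      HasDerivAt (fun y => ∫ η in Ioc (0:ℝ) 1, η ^ (-(1:ℝ)/2) * u t (A y η))
        (∫ η in Ioc (0:ℝ) 1, η ^ (-(1:ℝ)/2) * ((1-η) * U1 t (A x η))) x := by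
    intro x hx
    have hε : (0:ℝ) < min (1+x) (1-x) / 2 := by
      have := hx.1; have := hx.2
      have : (0:ℝ) < min (1+x) (1-x) := lt_min (by linarith) (by linarith)
      linarith
    have hball : ball x (min (1+x) (1-x) / 2) ⊆ Ioo (-1:ℝ) 1 := by
      intro y hy
      rw [Real.ball_eq_Ioo] at hy
      have h1 := min_le_left (1+x) (1-x)
      have h2 := min_le_right (1+x) (1-x)
      constructor <;> [linarith [hy.1]; linarith [hy.2]]
    obtain ⟨C, hC⟩ := isCompact_Icc.exists_bound_of_continuousOn (hcU1 t ht)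
    refine sit_hasDerivAt x _ C hε (fun y η => u t (A y η))
      (fun y η => (1-η) * U1 t (A y η)) ?_ ?_ ?_ ?_
    · intro y hy
      exact (hcu t ht).comp (Continuous.continuousOn (by simp only [hA]; fun_prop))
        (fun η hη => hmem y (hball hy) η hη)
    · refine ContinuousOn.mul (by fun_prop) ?_
      exact (hcU1 t ht).comp (Continuous.continuousOn (by simp only [hA]; fun_prop))
        (fun η hη => hmem x hx η hη)
    · intro y hy η hη
      rw [abs_mul]
      calc |1 - η| * |U1 t (A y η)| ≤ 1 * C := by
            refine mul_le_mul (habs η hη) ?_ (abs_nonneg _) zero_le_one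
            simpa using hC (A y η) (hmem y (hball hy) η (Ioc_subset_Icc_self hη))
        _ = C := one_mul C
    · intro η hη y hy
      rcases eq_or_lt_of_le hη.2 with h1 | h1
      · subst h1
        have heq : (fun y' => u t (A y' 1)) = fun _ => u t (-1) := by
          funext y'
          simp only [hA]
          congr 1
          ring
        rw [heq]
        refine (hasDerivAt_const (x := y) (c := u t (-1))).congr_deriv ?_
        norm_num
      · have hinner : HasDerivAt (fun y' => A y' η) (1-η) y := by
          simp only [hA]
          simpa [Pi.sub_def] using ((hasDerivAt_id' y).sub (((hasDerivAt_id' y).const_add 1).mul_const η))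
        have houter := hU1d t ht (A y η) (hmemo y (hball hy) η ⟨hη.1, h1⟩)
        have hcomp := houter.comp y hinner
        simpa [Function.comp_def, mul_comm] using hcomp
  -- second derivative in the space variable under the integral sign
  have hDxx : HasDerivAt
      (fun y => ∫ η in Ioc (0:ℝ) 1, η ^ (-(1:ℝ)/2) * ((1-η) * U1 t (A y η)))
      (∫ η in Ioc (0:ℝ) 1, η ^ (-(1:ℝ)/2) * ((1-η)^2 * U2 t (A σ η))) σ := by
    have hε : (0:ℝ) < min (1+σ) (1-σ) / 2 := by
      have := hσ.1; have := hσ.2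
      have : (0:ℝ) < min (1+σ) (1-σ) := lt_min (by linarith) (by linarith)
      linarith
    have hball : ball σ (min (1+σ) (1-σ) / 2) ⊆ Ioo (-1:ℝ) 1 := by
      intro y hy
      rw [Real.ball_eq_Ioo] at hy
      have h1 := min_le_left (1+σ) (1-σ)
      have h2 := min_le_right (1+σ) (1-σ)
      constructor <;> [linarith [hy.1]; linarith [hy.2]]
    obtain ⟨C, hC⟩ := isCompact_Icc.exists_bound_of_continuousOn (hcU2 t ht)
    refine sit_hasDerivAt σ _ C hε (fun y η => (1-η) * U1 t (A y η))
      (fun y η => (1-η)^2 * U2 t (A y η)) ?_ ?_ ?_ ?_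
    · intro y hy
      refine ContinuousOn.mul (by fun_prop) ?_
      exact (hcU1 t ht).comp (Continuous.continuousOn (by simp only [hA]; fun_prop))
        (fun η hη => hmem y (hball hy) η hη)
    · refine ContinuousOn.mul (by fun_prop) ?_
      exact (hcU2 t ht).comp (Continuous.continuousOn (by simp only [hA]; fun_prop))
        (fun η hη => hmem σ hσ η hη)
    · intro y hy η hη
      rw [abs_mul]
      calc |(1 - η)^2| * |U2 t (A y η)| ≤ 1 * C := by
            refine mul_le_mul ?_ ?_ (abs_nonneg _) zero_le_one
            · rw [abs_pow]
              exact pow_le_one₀ (abs_nonneg _) (habs η hη)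
            · simpa using hC (A y η) (hmem y (hball hy) η (Ioc_subset_Icc_self hη))
        _ = C := one_mul C
    · intro η hη y hy
      rcases eq_or_lt_of_le hη.2 with h1 | h1
      · subst h1
        have heq : (fun y' => (1-1) * U1 t (A y' 1)) = fun _ => (0:ℝ) := by
          funext y'
          ring
        rw [heq]
        refine (hasDerivAt_const (x := y) (c := (0:ℝ))).congr_deriv ?_
        norm_num
      · have hinner : HasDerivAt (fun y' => A y' η) (1-η) y := by
          simp only [hA]
          simpa [Pi.sub_def] using ((hasDerivAt_id' y).sub (((hasDerivAt_id' y).const_add 1).mul_const η))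
        have houter := hU2d t ht (A y η) (hmemo y (hball hy) η ⟨hη.1, h1⟩)
        have hcomp := (houter.comp y hinner).const_mul (1-η)
        have heq : (1-η) * (U2 t (A y η) * (1-η)) = (1-η)^2 * U2 t (A y η) := by ring
        show HasDerivAt (fun y' => (1-η) * U1 t (A y' η)) ((1-η)^2 * U2 t (A y η)) y
        rw [← heq]
        simpa [Function.comp_def] using hcomp
  -- derivative of the rpow weight
  have hrpow : ∀ x ∈ Ioo (-1:ℝ) 1, HasDerivAt (fun y : ℝ => (1+y) ^ ((1:ℝ)/2))
      ((1/2) * (1+x) ^ (-(1:ℝ)/2)) x := by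
    intro x hx
    have h := (Real.hasDerivAt_rpow_const (x := 1+x) (p := (1:ℝ)/2)
      (Or.inl (by linarith [hx.1]))).comp x ((hasDerivAt_id x).const_add 1)
    refine h.congr_deriv ?_
    norm_num
  have hrpow2 : HasDerivAt (fun y : ℝ => (1+y) ^ (-(1:ℝ)/2))
      (-(1/2) * (1+σ) ^ (-(3:ℝ)/2)) σ := by
    have h := (Real.hasDerivAt_rpow_const (x := 1+σ) (p := -(1:ℝ)/2)
      (Or.inl (by linarith [hσ.1]))).comp σ ((hasDerivAt_id σ).const_add 1)
    refine h.congr_deriv ?_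
    norm_num
  -- first space derivative of w
  have hw1 : ∀ x ∈ Ioo (-1:ℝ) 1, HasDerivAt (fun y => w t y)
      ((1/2) * (1+x) ^ (-(1:ℝ)/2) * (∫ η in Ioc (0:ℝ) 1, η ^ (-(1:ℝ)/2) * u t (A x η)) + (1+x) ^ ((1:ℝ)/2) * (∫ η in Ioc (0:ℝ) 1, η ^ (-(1:ℝ)/2) * ((1-η) * U1 t (A x η)))) x := by
    intro x hx
    have h := (hrpow x hx).mul (hDx x hx)
    refine HasDerivAt.congr_of_eventuallyEq h ?_
    filter_upwards [isOpen_Ioo.mem_nhds hx] with y hy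
    exact hcov t y hy
  -- the three goal derivatives
  have hder_t : deriv (fun τ => w τ σ) t = (1+σ) ^ ((1:ℝ)/2) * (∫ η in Ioc (0:ℝ) 1, η ^ (-(1:ℝ)/2) * deriv (fun τ' => u τ' (A σ η)) t) := by
    have h := hDt.const_mul ((1+σ) ^ ((1:ℝ)/2))
    refine HasDerivAt.deriv (HasDerivAt.congr_of_eventuallyEq h ?_)
    exact Eventually.of_forall (fun τ => hcov τ σ hσ)
  have hder_x : deriv (fun x => w t x) σ =
      (1/2) * (1+σ) ^ (-(1:ℝ)/2) * (∫ η in Ioc (0:ℝ) 1, η ^ (-(1:ℝ)/2) * u t (A σ η)) + (1+σ) ^ ((1:ℝ)/2) * (∫ η in Ioc (0:ℝ) 1, η ^ (-(1:ℝ)/2) * ((1-η) * U1 t (A σ η))) :=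
    (hw1 σ hσ).deriv
  have hder_xx : deriv (fun x => deriv (fun y => w t y) x) σ =
      -(1/4) * (1+σ) ^ (-(3:ℝ)/2) * (∫ η in Ioc (0:ℝ) 1, η ^ (-(1:ℝ)/2) * u t (A σ η)) + (1+σ) ^ (-(1:ℝ)/2) * (∫ η in Ioc (0:ℝ) 1, η ^ (-(1:ℝ)/2) * ((1-η) * U1 t (A σ η)))
        + (1+σ) ^ ((1:ℝ)/2) * (∫ η in Ioc (0:ℝ) 1, η ^ (-(1:ℝ)/2) * ((1-η)^2 * U2 t (A σ η))) := by
    have hev : deriv (fun y => w t y) =ᶠ[nhds σ]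
        (fun x => (1/2) * (1+x) ^ (-(1:ℝ)/2) * (∫ η in Ioc (0:ℝ) 1, η ^ (-(1:ℝ)/2) * u t (A x η)) + (1+x) ^ ((1:ℝ)/2) * (∫ η in Ioc (0:ℝ) 1, η ^ (-(1:ℝ)/2) * ((1-η) * U1 t (A x η)))) := by
      filter_upwards [isOpen_Ioo.mem_nhds hσ] with x hx
      exact (hw1 x hx).deriv
    rw [Filter.EventuallyEq.deriv_eq hev]
    have h1 := (hrpow2.const_mul (1/2 : ℝ)).mul (hDx σ hσ)
    have h2 := (hrpow σ hσ).mul hDxx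
    have h := h1.add h2
    refine HasDerivAt.deriv (?_ : HasDerivAt _ _ σ)
    refine h.congr_deriv ?_
    ring
  -- basic positivity
  have hc0 : (0:ℝ) < 1 + σ := by linarith [hσ.1]
  -- sectional continuity on [0,1]
  have hcu01 : ContinuousOn (fun η => u t (A σ η)) (Icc 0 1) :=
    (hcu t ht).comp (Continuous.continuousOn (by simp only [hA]; fun_prop))
      (fun η hη => hmem σ hσ η hη)
  have hcU101 : ContinuousOn (fun η => U1 t (A σ η)) (Icc 0 1) :=
    (hcU1 t ht).comp (Continuous.continuousOn (by simp only [hA]; fun_prop))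
      (fun η hη => hmem σ hσ η hη)
  have hcU201 : ContinuousOn (fun η => U2 t (A σ η)) (Icc 0 1) :=
    (hcU2 t ht).comp (Continuous.continuousOn (by simp only [hA]; fun_prop))
      (fun η hη => hmem σ hσ η hη)
  have hcpow : ContinuousOn (fun η : ℝ => η ^ ((1:ℝ)/2)) (Icc 0 1) :=
    fun η _ => (Real.continuousAt_rpow_const η _ (Or.inr (by norm_num))).continuousWithinAt
  -- the fundamental theorem of calculus step
  have hA1 : A σ (1:ℝ) = -1 := by simp only [hA]; ring
  have hφcont : ContinuousOn (fun y => (2*(1+σ)^2*(y*(1-y)) * U2 t (A σ y) + (1+σ)*(((n:ℝ)+2)*y - 1) * U1 t (A σ y) - (((n:ℝ)-1)/2) * u t (A σ y))) (Icc 0 1) := by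
    refine ContinuousOn.sub (ContinuousOn.add ?_ ?_) ?_
    · exact (Continuous.continuousOn (by fun_prop)).mul hcU201
    · exact (Continuous.continuousOn (by fun_prop)).mul hcU101
    · exact continuousOn_const.mul hcu01
  have hφint : IntervalIntegrable (fun η : ℝ => η ^ (-(1:ℝ)/2) * (2*(1+σ)^2*(η*(1-η)) * U2 t (A σ η) + (1+σ)*(((n:ℝ)+2)*η - 1) * U1 t (A σ η) - (((n:ℝ)-1)/2) * u t (A σ η))) volume 0 1 := by
    rw [intervalIntegrable_iff, uIoc_of_le (by norm_num : (0:ℝ) ≤ 1)]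
    exact sit_integrable hφcont
  have hcF : ContinuousOn (fun η' : ℝ =>
      -2*(1+σ) * (η' ^ ((1:ℝ)/2) * ((1-η') * U1 t (A σ η')))
        - ((n:ℝ)-1) * (η' ^ ((1:ℝ)/2) * u t (A σ η'))) (Icc 0 1) := by
    refine ContinuousOn.sub ?_ ?_
    · exact continuousOn_const.mul (hcpow.mul
        ((Continuous.continuousOn (by fun_prop)).mul hcU101))
    · exact continuousOn_const.mul (hcpow.mul hcu01)
  have hderivF : ∀ η ∈ Ioo (0:ℝ) 1, HasDerivWithinAt (fun η' : ℝ =>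
      -2*(1+σ) * (η' ^ ((1:ℝ)/2) * ((1-η') * U1 t (A σ η')))
        - ((n:ℝ)-1) * (η' ^ ((1:ℝ)/2) * u t (A σ η')))
      (η ^ (-(1:ℝ)/2) * (2*(1+σ)^2*(η*(1-η)) * U2 t (A σ η) + (1+σ)*(((n:ℝ)+2)*η - 1) * U1 t (A σ η) - (((n:ℝ)-1)/2) * u t (A σ η))) (Ioi η) η := by
    intro η hη
    have hq : HasDerivAt (fun η' : ℝ => η' ^ ((1:ℝ)/2)) ((1/2) * η ^ (-(1:ℝ)/2)) η := by
      have h := Real.hasDerivAt_rpow_const (x := η) (p := (1:ℝ)/2) (Or.inl hη.1.ne')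
      convert h using 1
      norm_num
    have hA' : HasDerivAt (fun η' => A σ η') (-(1+σ)) η := by
      simp only [hA]
      simpa using ((hasDerivAt_id η).const_mul (1+σ)).const_sub σ
    have hu : HasDerivAt (fun η' => u t (A σ η')) (U1 t (A σ η) * -(1+σ)) η := by
      have h := (hU1d t ht (A σ η) (hmemo σ hσ η hη)).comp η hA'
      simpa [Function.comp_def] using h
    have hU1' : HasDerivAt (fun η' => U1 t (A σ η')) (U2 t (A σ η) * -(1+σ)) η := by
      have h := (hU2d t ht (A σ η) (hmemo σ hσ η hη)).comp η hA'
      simpa [Function.comp_def] using h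
    have h1mη : HasDerivAt (fun η' : ℝ => 1 - η') (-1) η := by
      simpa using (hasDerivAt_id η).const_sub 1
    have T1 := (hq.mul (h1mη.mul hU1')).const_mul (-2*(1+σ) : ℝ)
    have T2 := (hq.mul hu).const_mul (((n:ℝ)-1) : ℝ)
    have hF := T1.sub T2
    have hP : η * η ^ (-(1:ℝ)/2) = η ^ ((1:ℝ)/2) := by
      rw [← Real.rpow_one_add' hη.1.le (by norm_num)]
      norm_num
    refine HasDerivAt.hasDerivWithinAt ?_
    refine hF.congr_deriv ?_
    simp only [Pi.mul_apply]
    rw [← hP]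
    ring
  have hFTC : (∫ η in Ioc (0:ℝ) 1, η ^ (-(1:ℝ)/2) * (2*(1+σ)^2*(η*(1-η)) * U2 t (A σ η) + (1+σ)*(((n:ℝ)+2)*η - 1) * U1 t (A σ η) - (((n:ℝ)-1)/2) * u t (A σ η)))
      = -((n:ℝ)-1) * u t (-1) := by
    rw [← intervalIntegral.integral_of_le (by norm_num : (0:ℝ) ≤ 1)]
    rw [intervalIntegral.integral_eq_sub_of_hasDeriv_right_of_le
      (by norm_num : (0:ℝ) ≤ 1) hcF hderivF hφint]
    rw [hA1]
    norm_num [Real.one_rpow, Real.zero_rpow]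
    ring
  -- substitute the PDE in the time-derivative integral
  have hGt_eq : (∫ η in Ioc (0:ℝ) 1, η ^ (-(1:ℝ)/2) * deriv (fun τ' => u τ' (A σ η)) t) = ∫ η in Ioc (0:ℝ) 1, η ^ (-(1:ℝ)/2) * ((1 - (A σ η) ^ 2) * U2 t (A σ η) - ((n:ℝ) + 1) * (A σ η) * U1 t (A σ η)) := by
    refine setIntegral_congr_fun measurableSet_Ioc (fun η hη => ?_)
    have h := hueq t ht (A σ η) (hmem σ hσ η (Ioc_subset_Icc_self hη))
    simp only [hU1, hU2]
    rw [h]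
  -- integrability of the four integrands
  have i0 : IntegrableOn (fun η : ℝ => η ^ (-(1:ℝ)/2) * u t (A σ η)) (Ioc 0 1) :=
    sit_integrable hcu01
  have i1 : IntegrableOn (fun η : ℝ => η ^ (-(1:ℝ)/2) * ((1-η) * U1 t (A σ η))) (Ioc 0 1) :=
    sit_integrable ((Continuous.continuousOn (by fun_prop)).mul hcU101)
  have i2 : IntegrableOn (fun η : ℝ => η ^ (-(1:ℝ)/2) * ((1-η)^2 * U2 t (A σ η))) (Ioc 0 1) :=
    sit_integrable ((Continuous.continuousOn (by fun_prop)).mul hcU201)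
  have i3 : IntegrableOn (fun η : ℝ => η ^ (-(1:ℝ)/2) * ((1 - (A σ η) ^ 2) * U2 t (A σ η) - ((n:ℝ) + 1) * (A σ η) * U1 t (A σ η))) (Ioc 0 1) := by
    refine sit_integrable (ContinuousOn.sub ?_ ?_)
    · exact (Continuous.continuousOn (by simp only [hA]; fun_prop)).mul hcU201
    · exact (Continuous.continuousOn (by simp only [hA]; fun_prop)).mul hcU101
  -- the combined integral identity
  have hcombine : (1+σ) * (∫ η in Ioc (0:ℝ) 1, η ^ (-(1:ℝ)/2) * deriv (fun τ' => u τ' (A σ η)) t) - (1-σ)*(1+σ)^2 * (∫ η in Ioc (0:ℝ) 1, η ^ (-(1:ℝ)/2) * ((1-η)^2 * U2 t (A σ η)))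
      - (1+σ)*(1 - σ - (n:ℝ)*σ) * (∫ η in Ioc (0:ℝ) 1, η ^ (-(1:ℝ)/2) * ((1-η) * U1 t (A σ η))) - (((n:ℝ)-1)/2) * (∫ η in Ioc (0:ℝ) 1, η ^ (-(1:ℝ)/2) * u t (A σ η))
      = -((n:ℝ)-1) * u t (-1) := by
    rw [hGt_eq]
    rw [← integral_const_mul (1+σ : ℝ), ← integral_const_mul ((1-σ)*(1+σ)^2 : ℝ),
      ← integral_const_mul ((1+σ)*(1 - σ - (n:ℝ)*σ) : ℝ), ← integral_const_mul ((((n:ℝ)-1)/2) : ℝ)]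
    have j1 : IntegrableOn (fun η : ℝ =>
        (1+σ) * (η ^ (-(1:ℝ)/2) * ((1 - (A σ η) ^ 2) * U2 t (A σ η) - ((n:ℝ) + 1) * (A σ η) * U1 t (A σ η)))
          - (1-σ)*(1+σ)^2 * (η ^ (-(1:ℝ)/2) * ((1-η)^2 * U2 t (A σ η)))) (Ioc 0 1) :=
      (i3.const_mul _).sub (i2.const_mul _)
    have j2 : IntegrableOn (fun η : ℝ =>
        ((1+σ) * (η ^ (-(1:ℝ)/2) * ((1 - (A σ η) ^ 2) * U2 t (A σ η) - ((n:ℝ) + 1) * (A σ η) * U1 t (A σ η)))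
          - (1-σ)*(1+σ)^2 * (η ^ (-(1:ℝ)/2) * ((1-η)^2 * U2 t (A σ η))))
          - (1+σ)*(1 - σ - (n:ℝ)*σ) * (η ^ (-(1:ℝ)/2) * ((1-η) * U1 t (A σ η)))) (Ioc 0 1) :=
      j1.sub (i1.const_mul _)
    rw [← integral_sub (i3.const_mul _) (i2.const_mul _)]
    rw [← integral_sub j1 (i1.const_mul _)]
    rw [← integral_sub j2 (i0.const_mul _)]
    rw [← hFTC]
    refine setIntegral_congr_fun measurableSet_Ioc (fun η hη => ?_)
    simp only [hA]
    ring
  -- the rpow algebra facts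
  have hQP : (1+σ) * (1+σ) ^ (-(1:ℝ)/2) = (1+σ) ^ ((1:ℝ)/2) := by
    rw [← Real.rpow_one_add' hc0.le (by norm_num)]
    norm_num
  have hQR : (1+σ) * (1+σ) ^ (-(3:ℝ)/2) = (1+σ) ^ (-(1:ℝ)/2) := by
    rw [← Real.rpow_one_add' hc0.le (by norm_num)]
    norm_num
  -- final assembly
  rw [hder_t, hder_x, hder_xx, hcov t σ hσ]
  linear_combination ((1+σ) ^ (-(1:ℝ)/2)) * hcombine
    + (-(∫ η in Ioc (0:ℝ) 1, η ^ (-(1:ℝ)/2) * deriv (fun τ' => u τ' (A σ η)) t) + (1-σ^2) * (∫ η in Ioc (0:ℝ) 1, η ^ (-(1:ℝ)/2) * ((1-η)^2 * U2 t (A σ η))) - (n:ℝ)*σ * (∫ η in Ioc (0:ℝ) 1, η ^ (-(1:ℝ)/2) * ((1-η) * U1 t (A σ η))) + (2*(n:ℝ)-1)/4 * (∫ η in Ioc (0:ℝ) 1, η ^ (-(1:ℝ)/2) * u t (A σ η))) * hQP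
    + ((1-σ)/4 * (∫ η in Ioc (0:ℝ) 1, η ^ (-(1:ℝ)/2) * u t (A σ η))) * hQR
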